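/- Let M be a closed Riemannian manifold, {μₑ} ⊂ M_c(M) a sequence of nonatomic Radon measures with μₑ → μ weak-* and λ_k(μₑ) ≡ 1 for a fixed k ≥ 1. Then the set of unstable points of the sequence {μₑ} contains at most k distinct points. -/

import Mathlib

open MeasureTheory Filter Topology
open scoped Manifold

noncomputable section

/-- Euclidean model space. -/
abbrev Euc (m : ℕ) := EuclideanSpace ℝ (Fin m)

/-- The squared Riemannian norm `|dφ|²_g(x)` of the differential of `φ` at `x`,
computed from the (inverse) metric `gInv` acting on cotangent vectors via the
Euclidean identification of tangent spaces. -/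
def gradSqG {m : ℕ} {M : Type*} [TopologicalSpace M] [ChartedSpace (Euc m) M]
    (gInv : M → Euc m →L[ℝ] Euc m) (φ : M → ℝ) (x : M) : ℝ :=
  (mfderiv (𝓡 m) 𝓘(ℝ, ℝ) φ x : Euc m →L[ℝ] ℝ)
    (gInv x ((InnerProductSpace.toDual ℝ (Euc m)).symm
      (mfderiv (𝓡 m) 𝓘(ℝ, ℝ) φ x : Euc m →L[ℝ] ℝ)))

/-- `φ ∈ C^∞(M)`. -/
def SmoothFn (m : ℕ) {M : Type*} [TopologicalSpace M] [ChartedSpace (Euc m) M] (φ : M → ℝ) : Prop :=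
  ContMDiff (𝓡 m) 𝓘(ℝ, ℝ) (⊤ : ℕ∞) φ

/-- The quadratic form `Q_μ(φ) = ∫ |dφ|²_g dv_g − ∫ φ² dμ`. -/
def Qform {m : ℕ} {M : Type*} [TopologicalSpace M] [ChartedSpace (Euc m) M] [MeasurableSpace M]
    (vol μ : Measure M) (gInv : M → Euc m →L[ℝ] Euc m) (φ : M → ℝ) : ℝ :=
  (∫ x, gradSqG gInv φ x ∂vol) - ∫ x, (φ x) ^ 2 ∂μ

/-- `ind(μ, Ω) = 0`: the form `Q_μ` is nonnegative on `C₀^∞(Ω)`. -/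
def IndexZero {m : ℕ} {M : Type*} [TopologicalSpace M] [ChartedSpace (Euc m) M] [MeasurableSpace M]
    (vol μ : Measure M) (gInv : M → Euc m →L[ℝ] Euc m) (Ω : Set M) : Prop :=
  ∀ φ : M → ℝ, SmoothFn m φ → tsupport φ ⊆ Ω → 0 ≤ Qform vol μ gInv φ

/-- The variational eigenvalue
`λ_k(μ) = inf_{F_{k+1} ⊂ C^∞(M)} sup_{φ ∈ F_{k+1}} (∫|dφ|²_g dv_g)/(∫φ² dμ)`. -/
def lambdaK {m : ℕ} {M : Type*} [TopologicalSpace M] [ChartedSpace (Euc m) M] [MeasurableSpace M]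
    (vol : Measure M) (gInv : M → Euc m →L[ℝ] Euc m) (k : ℕ) (μ : Measure M) : ℝ :=
  sInf {r : ℝ | ∃ F : Submodule ℝ (M → ℝ), Module.finrank ℝ F = k + 1 ∧
    (∀ φ ∈ F, SmoothFn m φ) ∧
    r = sSup {s : ℝ | ∃ φ ∈ F,
      s = (∫ x, gradSqG gInv φ x ∂vol) / ∫ x, (φ x) ^ 2 ∂μ}}

/-- Weak-* convergence of measures (testing against continuous functions). -/
def WeakStarMeas {M : Type*} [TopologicalSpace M] [MeasurableSpace M]
    (μs : ℕ → Measure M) (μ : Measure M) : Prop :=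
  ∀ f : M → ℝ, Continuous f →
    Tendsto (fun n => ∫ x, f x ∂(μs n)) atTop (𝓝 (∫ x, f x ∂μ))

/-- `p` is a stable point for the sequence `{μₑ}`: some neighborhood `Ω` of `p` has
`ind(μₑ, Ω) = 0` along a subsequence. -/
def StablePt {m : ℕ} {M : Type*} [TopologicalSpace M] [ChartedSpace (Euc m) M] [MeasurableSpace M]
    (vol : Measure M) (gInv : M → Euc m →L[ℝ] Euc m) (μs : ℕ → Measure M) (p : M) : Prop :=
  ∃ Ω : Set M, IsOpen Ω ∧ p ∈ Ω ∧
    ∃ ψ : ℕ → ℕ, StrictMono ψ ∧ ∀ j, IndexZero vol (μs (ψ j)) gInv Ω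

end


noncomputable section AuxLemmas

open MeasureTheory Filter Topology
open scoped Manifold

variable {m : ℕ} {M : Type*} [TopologicalSpace M] [ChartedSpace (Euc m) M]

omit [TopologicalSpace M] [ChartedSpace (Euc m) M] in
lemma smul_pair_aux (gx : Euc m →L[ℝ] Euc m) (D : Euc m →L[ℝ] ℝ) (c : ℝ) :
    (c • D) (gx ((InnerProductSpace.toDual ℝ (Euc m)).symm (c • D)))
      = c ^ 2 * D (gx ((InnerProductSpace.toDual ℝ (Euc m)).symm D)) := by
  simp only [ContinuousLinearMap.smul_apply, _root_.map_smul, smul_eq_mul]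
  ring

lemma gradSqG_congr (gInv : M → Euc m →L[ℝ] Euc m) {f g : M → ℝ} {x : M}
    (h : f =ᶠ[𝓝 x] g) : gradSqG gInv f x = gradSqG gInv g x := by
  unfold gradSqG
  rw [h.mfderiv_eq]
  rfl

lemma gradSqG_zero_of_nmem_tsupport (gInv : M → Euc m →L[ℝ] Euc m) {f : M → ℝ} {x : M}
    (hx : x ∉ tsupport f) : gradSqG gInv f x = 0 := by
  have hev : f =ᶠ[𝓝 x] (fun _ => 0) := by
    filter_upwards [(isClosed_tsupport f).isOpen_compl.mem_nhds hx] with y hy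
    exact image_eq_zero_of_notMem_tsupport hy
  rw [gradSqG_congr gInv hev]
  unfold gradSqG
  rw [mfderiv_const]
  simp
  rfl

lemma gradSqG_fun_zero (gInv : M → Euc m →L[ℝ] Euc m) {f : M → ℝ} {x : M}
    (h : f =ᶠ[𝓝 x] fun _ => 0) : gradSqG gInv f x = 0 := by
  rw [gradSqG_congr gInv h]
  unfold gradSqG
  rw [mfderiv_const]
  simp
  rfl

lemma gradSqG_smul (gInv : M → Euc m →L[ℝ] Euc m) {f : M → ℝ} {x : M}
    (hf : MDifferentiableAt (𝓡 m) 𝓘(ℝ, ℝ) f x) (c : ℝ) :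
    gradSqG gInv (c • f) x = c ^ 2 * gradSqG gInv f x := by
  unfold gradSqG
  rw [(hf.hasMFDerivAt.const_smul c).mfderiv]
  exact smul_pair_aux (gInv x) (mfderiv (𝓡 m) 𝓘(ℝ, ℝ) f x) c

/-- The smooth functions form a submodule of `M → ℝ`. -/
def smoothSubmodule (m : ℕ) (M : Type*) [TopologicalSpace M] [ChartedSpace (Euc m) M] :
    Submodule ℝ (M → ℝ) where
  carrier := {f | SmoothFn m f}
  add_mem' hf hg := hf.add hg
  zero_mem' := contMDiff_const
  smul_mem' c f hf := (contMDiff_const : ContMDiff (𝓡 m) 𝓘(ℝ, ℝ) (⊤ : ℕ∞) (fun _ : M => c)).smul hf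

end AuxLemmas

/- STATEMENT 14: for a sequence of nonatomic measures `μₑ` on a closed Riemannian
manifold with `μₑ → μ` weak-* and `λ_k(μₑ) ≡ 1`, there are at most `k` distinct
unstable points. -/
theorem at_most_k_unstable_points {m : ℕ} {M : Type*} [TopologicalSpace M]
    [ChartedSpace (Euc m) M] [IsManifold (𝓡 m) (⊤ : ℕ∞) M]
    [CompactSpace M] [T2Space M] [MeasurableSpace M] [BorelSpace M]
    (vol : Measure M) [IsFiniteMeasure vol]
    (gInv : M → Euc m →L[ℝ] Euc m)
    (μs : ℕ → Measure M) [∀ n, IsFiniteMeasure (μs n)]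
    (hna : ∀ n (p : M), μs n {p} = 0)
    (μ : Measure M) (hw : WeakStarMeas μs μ)
    (k : ℕ) (hk : 1 ≤ k) (hlam : ∀ n, lambdaK vol gInv k (μs n) = 1) :
    ∀ S : Finset M, (∀ p ∈ S, ¬ StablePt vol gInv μs p) → S.card ≤ k := by
  classical
  intro S hS
  by_contra hcard
  push_neg at hcard
  obtain ⟨T, hTS, hTcard⟩ := Finset.exists_subset_card_eq hcard
  obtain ⟨U, hU, hUdisj⟩ := Set.Finite.t2_separation (T : Set M).toFinite
  -- Step 1: for each unstable point, IndexZero holds only for finitely many n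
  have hfin : ∀ p ∈ T, {n : ℕ | IndexZero vol (μs n) gInv (U p)}.Finite := by
    intro p hp
    by_contra hinf
    exact hS p (hTS hp) ⟨U p, (hU p).2, (hU p).1,
      Nat.nth (fun n => IndexZero vol (μs n) gInv (U p)),
      Nat.nth_strictMono hinf, fun j => Nat.nth_mem_of_infinite hinf j⟩
  have hbd : ∀ p ∈ T, ∃ N : ℕ, ∀ n, N ≤ n → ¬ IndexZero vol (μs n) gInv (U p) := by
    intro p hp
    obtain ⟨b, hb⟩ := (hfin p hp).bddAbove
    exact ⟨b + 1, fun n hn hmem => absurd (hb hmem) (by omega)⟩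
  choose! N hN using hbd
  set n₀ := T.sup N with hn₀
  set ν := μs n₀ with hν
  -- Step 2: simultaneous negative directions
  have hneg : ∀ p ∈ T, ∃ φ : M → ℝ, SmoothFn m φ ∧ tsupport φ ⊆ U p ∧
      Qform vol ν gInv φ < 0 := by
    intro p hp
    have h1 := hN p hp n₀ (Finset.le_sup hp)
    unfold IndexZero at h1
    push_neg at h1
    exact h1
  choose! φf hφs hφsupp hφQ using hneg
  -- index type
  have hTne : T.Nonempty := Finset.card_pos.mp (by omega)
  haveI : Nonempty {p // p ∈ T} := ⟨⟨hTne.choose, hTne.choose_spec⟩⟩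
  set Φ : {p // p ∈ T} → M → ℝ := fun i => φf i.1 with hΦ
  have hΦs : ∀ i, SmoothFn m (Φ i) := fun i => hφs i.1 i.2
  have hΦsupp : ∀ i, tsupport (Φ i) ⊆ U i.1 := fun i => hφsupp i.1 i.2
  have hΦQ : ∀ i, Qform vol ν gInv (Φ i) < 0 := fun i => hφQ i.1 i.2
  have hdisj : ∀ i j : {p // p ∈ T}, i ≠ j →
      Disjoint (tsupport (Φ i)) (tsupport (Φ j)) := by
    intro i j hij
    exact Set.disjoint_of_subset (hΦsupp i) (hΦsupp j)
      (hUdisj i.2 j.2 (fun h => hij (Subtype.ext h)))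
  have hzero_out : ∀ (i : {p // p ∈ T}) (x : M), x ∉ tsupport (Φ i) → Φ i x = 0 :=
    fun i x hx => image_eq_zero_of_notMem_tsupport hx
  -- nonvanishing
  have hΦne : ∀ i, Φ i ≠ 0 := by
    intro i h0
    have := hΦQ i
    rw [h0] at this
    have hz : Qform vol ν gInv (0 : M → ℝ) = 0 := by
      unfold Qform
      have h1 : ∀ x : M, gradSqG gInv (0 : M → ℝ) x = 0 := fun x =>
        gradSqG_fun_zero gInv (Filter.Eventually.of_forall fun _ => rfl)
      simp [h1]
    rw [hz] at this
    exact lt_irrefl _ this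
  -- linear independence
  have hli : LinearIndependent ℝ Φ := by
    rw [linearIndependent_iff']
    intro s g hsum i hi
    by_contra hgi
    obtain ⟨x, hx⟩ : ∃ x, Φ i x ≠ 0 := by
      by_contra hz
      push_neg at hz
      exact hΦne i (funext hz)
    have hxi : x ∈ tsupport (Φ i) := subset_tsupport _ hx
    have hcf := congrFun hsum x
    rw [Finset.sum_apply] at hcf
    rw [Finset.sum_eq_single i (fun j _ hji => by
        have hxj : x ∉ tsupport (Φ j) :=
          fun hmem => Set.disjoint_left.mp (hdisj j i hji) hmem hxi
        rw [Pi.smul_apply, hzero_out j x hxj, smul_zero])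
      (fun his => absurd hi his)] at hcf
    rw [Pi.smul_apply, smul_eq_mul, Pi.zero_apply] at hcf
    rcases mul_eq_zero.mp hcf with h | h
    · exact hgi h
    · exact hx h
  set F : Submodule ℝ (M → ℝ) := Submodule.span ℝ (Set.range Φ) with hF
  have hfr : Module.finrank ℝ F = k + 1 := by
    rw [hF, finrank_span_eq_card hli, Fintype.card_coe, hTcard]
  have hsm : ∀ ψ ∈ F, SmoothFn m ψ := by
    intro ψ hψ
    have hle : F ≤ smoothSubmodule m M := by
      rw [hF]
      apply Submodule.span_le.mpr
      rintro _ ⟨i, rfl⟩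
      exact hΦs i
    exact hle hψ
  -- quantities
  set nq : {p // p ∈ T} → ℝ := fun q => ∫ x, gradSqG gInv (Φ q) x ∂vol with hnq
  set dq : {p // p ∈ T} → ℝ := fun q => ∫ x, (Φ q x) ^ 2 ∂ν with hdq
  have hnd : ∀ q, nq q < dq q := fun q => sub_neg.mp (hΦQ q)
  have hd0 : ∀ q, 0 ≤ dq q := fun q => integral_nonneg (fun x => sq_nonneg _)
  have hρ : ∀ q, nq q / dq q < 1 := by
    intro q
    rcases (hd0 q).lt_or_eq with h | h
    · exact (div_lt_one h).mpr (hnd q)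
    · rw [← h, div_zero]; exact one_pos
  set c : ℝ := max 0 (Finset.univ.sup' Finset.univ_nonempty (fun q => nq q / dq q)) with hc
  have hc0 : (0 : ℝ) ≤ c := le_max_left _ _
  have hc1 : c < 1 := max_lt one_pos
    ((Finset.sup'_lt_iff Finset.univ_nonempty).mpr fun q _ => hρ q)
  have hcq : ∀ q, nq q / dq q ≤ c := fun q =>
    le_max_of_le_right (Finset.le_sup' (f := fun q => nq q / dq q) (Finset.mem_univ q))
  have hnc : ∀ q, nq q ≤ c * dq q := by
    intro q
    rcases (hd0 q).lt_or_eq with h | h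
    · exact (div_le_iff₀ h).mp (hcq q)
    · have := hnd q
      nlinarith
  -- the key ratio bound
  have hratio : ∀ ψ ∈ F, (∫ x, gradSqG gInv ψ x ∂vol) / (∫ x, (ψ x) ^ 2 ∂ν) ≤ c := by
    intro ψ hψF
    obtain ⟨coef, hcoef⟩ := (Submodule.mem_span_range_iff_exists_fun ℝ).mp hψF
    have hg0 : ∀ (q : {p // p ∈ T}) (x : M), x ∉ tsupport (Φ q) →
        gradSqG gInv (Φ q) x = 0 := fun q x hx => gradSqG_zero_of_nmem_tsupport gInv hx
    have hψval : ∀ y : M, ψ y = ∑ q, coef q * Φ q y := by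
      intro y
      rw [← hcoef, Finset.sum_apply]
      simp [smul_eq_mul]
    -- pointwise identity for the square
    have hP2 : ∀ x, (ψ x) ^ 2 = ∑ q, coef q ^ 2 * (Φ q x) ^ 2 := by
      intro x
      by_cases hx : ∃ p : {p // p ∈ T}, x ∈ tsupport (Φ p)
      · obtain ⟨p, hp⟩ := hx
        have hxo : ∀ q, q ≠ p → x ∉ tsupport (Φ q) := fun q hq hmem =>
          Set.disjoint_left.mp (hdisj q p hq) hmem hp
        have h1 : ψ x = coef p * Φ p x := by
          rw [hψval x]
          exact Finset.sum_eq_single p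
            (fun q _ hq => by rw [hzero_out q x (hxo q hq), mul_zero])
            (fun h => absurd (Finset.mem_univ p) h)
        rw [h1, Finset.sum_eq_single p
          (fun q _ hq => by rw [hzero_out q x (hxo q hq)]; ring)
          (fun h => absurd (Finset.mem_univ p) h)]
        ring
      · push_neg at hx
        have h1 : ψ x = 0 := by
          rw [hψval x]
          exact Finset.sum_eq_zero fun q _ => by rw [hzero_out q x (hx q), mul_zero]
        rw [h1]
        rw [Finset.sum_eq_zero fun q _ => by rw [hzero_out q x (hx q)]; ring]
        ring
    -- pointwise identity for the gradient term
    have hP1 : ∀ x, gradSqG gInv ψ x = ∑ q, coef q ^ 2 * gradSqG gInv (Φ q) x := by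
      intro x
      by_cases hx : ∃ p : {p // p ∈ T}, x ∈ tsupport (Φ p)
      · obtain ⟨p, hp⟩ := hx
        have hxo : ∀ q, q ≠ p → x ∉ tsupport (Φ q) := fun q hq hmem =>
          Set.disjoint_left.mp (hdisj q p hq) hmem hp
        have hWo : IsOpen (⋂ q ∈ Finset.univ.erase p, (tsupport (Φ q))ᶜ) :=
          isOpen_biInter_finset fun q _ => (isClosed_tsupport _).isOpen_compl
        have hxW : x ∈ ⋂ q ∈ Finset.univ.erase p, (tsupport (Φ q))ᶜ := by
          simp only [Set.mem_iInter, Set.mem_compl_iff]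
          intro q hq
          exact hxo q (Finset.ne_of_mem_erase hq)
        have hev : ψ =ᶠ[𝓝 x] coef p • Φ p := by
          filter_upwards [hWo.mem_nhds hxW] with y hy
          simp only [Set.mem_iInter, Set.mem_compl_iff] at hy
          rw [hψval y, Pi.smul_apply, smul_eq_mul]
          exact Finset.sum_eq_single p
            (fun q _ hq => by
              rw [hzero_out q y (hy q (Finset.mem_erase.mpr ⟨hq, Finset.mem_univ q⟩)),
                mul_zero])
            (fun h => absurd (Finset.mem_univ p) h)
        rw [gradSqG_congr gInv hev,
          gradSqG_smul gInv ((hΦs p).mdifferentiableAt (by simp)) (coef p),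
          Finset.sum_eq_single p
            (fun q _ hq => by rw [hg0 q x (hxo q hq), mul_zero])
            (fun h => absurd (Finset.mem_univ p) h)]
      · push_neg at hx
        have hWo : IsOpen (⋂ q : {p // p ∈ T}, (tsupport (Φ q))ᶜ) :=
          isOpen_iInter_of_finite fun q => (isClosed_tsupport _).isOpen_compl
        have hxW : x ∈ ⋂ q : {p // p ∈ T}, (tsupport (Φ q))ᶜ := by
          simp only [Set.mem_iInter, Set.mem_compl_iff]
          exact hx
        have hev : ψ =ᶠ[𝓝 x] fun _ => 0 := by
          filter_upwards [hWo.mem_nhds hxW] with y hy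
          simp only [Set.mem_iInter, Set.mem_compl_iff] at hy
          rw [hψval y]
          exact Finset.sum_eq_zero fun q _ => by rw [hzero_out q y (hy q), mul_zero]
        rw [gradSqG_fun_zero gInv hev,
          Finset.sum_eq_zero fun q _ => by rw [hg0 q x (hx q), mul_zero]]
    -- the denominator splits
    have hint2 : ∀ q : {p // p ∈ T},
        MeasureTheory.Integrable (fun x : M => coef q ^ 2 * (Φ q x) ^ 2) ν := by
      intro q
      have hcont : Continuous fun x : M => coef q ^ 2 * (Φ q x) ^ 2 :=
        continuous_const.mul ((hΦs q).continuous.pow 2)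
      exact hcont.integrable_of_hasCompactSupport (HasCompactSupport.of_compactSpace _)
    have hden : (∫ x, (ψ x) ^ 2 ∂ν) = ∑ q, coef q ^ 2 * dq q := by
      have h1 : (∫ x, (ψ x) ^ 2 ∂ν)
          = ∫ x, (∑ q, coef q ^ 2 * (Φ q x) ^ 2) ∂ν := by
        congr 1
        exact funext hP2
      rw [h1, MeasureTheory.integral_finset_sum _ (fun q _ => hint2 q)]
      exact Finset.sum_congr rfl fun q _ => by
        rw [MeasureTheory.integral_const_mul]
    have hden0 : (0 : ℝ) ≤ ∫ x, (ψ x) ^ 2 ∂ν := integral_nonneg fun x => sq_nonneg _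
    -- numerator: rewrite pointwise
    have hnum1 : (∫ x, gradSqG gInv ψ x ∂vol)
        = ∫ x, (∑ q, coef q ^ 2 * gradSqG gInv (Φ q) x) ∂vol := by
      congr 1
      exact funext hP1
    by_cases hint : MeasureTheory.Integrable
        (fun x => ∑ q, coef q ^ 2 * gradSqG gInv (Φ q) x) vol
    · -- split the numerator via indicators of the disjoint supports
      have hind : ∀ q : {p // p ∈ T},
          (tsupport (Φ q)).indicator (fun x => ∑ r, coef r ^ 2 * gradSqG gInv (Φ r) x)
            = fun x => coef q ^ 2 * gradSqG gInv (Φ q) x := by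
        intro q
        funext x
        by_cases hxq : x ∈ tsupport (Φ q)
        · rw [Set.indicator_of_mem hxq]
          exact Finset.sum_eq_single q
            (fun r _ hr => by
              rw [hg0 r x (fun hmem =>
                Set.disjoint_left.mp (hdisj r q hr) hmem hxq), mul_zero])
            (fun h => absurd (Finset.mem_univ q) h)
        · rw [Set.indicator_of_notMem hxq, hg0 q x hxq, mul_zero]
      have hfun_eq : (fun x => ∑ q, coef q ^ 2 * gradSqG gInv (Φ q) x)
          = fun x => ∑ q, (tsupport (Φ q)).indicator
              (fun x => ∑ r, coef r ^ 2 * gradSqG gInv (Φ r) x) x := by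
        funext x
        refine Finset.sum_congr rfl fun q _ => ?_
        rw [hind q]
      have hnum2 : (∫ x, gradSqG gInv ψ x ∂vol) = ∑ q, coef q ^ 2 * nq q := by
        rw [hnum1, hfun_eq,
          MeasureTheory.integral_finset_sum _ (fun q _ =>
            hint.indicator (isClosed_tsupport (Φ q)).measurableSet)]
        refine Finset.sum_congr rfl fun q _ => ?_
        rw [hind q, MeasureTheory.integral_const_mul]
      have hnum_le : (∫ x, gradSqG gInv ψ x ∂vol) ≤ c * ∫ x, (ψ x) ^ 2 ∂ν := by
        rw [hnum2, hden, Finset.mul_sum]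
        refine Finset.sum_le_sum fun q _ => ?_
        have h1 : coef q ^ 2 * nq q ≤ coef q ^ 2 * (c * dq q) :=
          mul_le_mul_of_nonneg_left (hnc q) (sq_nonneg _)
        linarith
      rcases hden0.lt_or_eq with h | h
      · exact (div_le_iff₀ h).mpr hnum_le
      · rw [← h, div_zero]
        exact hc0
    · rw [hnum1, MeasureTheory.integral_undef hint, zero_div]
      exact hc0
  -- conclude via the variational characterization
  set Λ : Set ℝ := {r : ℝ | ∃ F' : Submodule ℝ (M → ℝ), Module.finrank ℝ F' = k + 1 ∧
    (∀ φ ∈ F', SmoothFn m φ) ∧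
    r = sSup {s : ℝ | ∃ φ ∈ F',
      s = (∫ x, gradSqG gInv φ x ∂vol) / ∫ x, (φ x) ^ 2 ∂ν}} with hΛ
  have hlam0 : sInf Λ = 1 := hlam n₀
  set r : ℝ := sSup {s : ℝ | ∃ φ ∈ F,
    s = (∫ x, gradSqG gInv φ x ∂vol) / ∫ x, (φ x) ^ 2 ∂ν} with hr
  have hr_mem : r ∈ Λ := ⟨F, hfr, hsm, rfl⟩
  have hr_le : r ≤ c := by
    apply Real.sSup_le _ hc0
    rintro s ⟨ψ, hψF, rfl⟩
    exact hratio ψ hψF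
  have hbdd : BddBelow Λ := by
    by_contra h
    rw [Real.sInf_of_not_bddBelow h] at hlam0
    exact zero_ne_one hlam0
  have h1r : (1 : ℝ) ≤ r := hlam0 ▸ csInf_le hbdd hr_mem
  linarith
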